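/- Uniqueness of the global minimizer on the strict-feasibility set: with F, P as above, let F¹ = {w ∈ F : s_b Re(w v_b) > 0 for some b} be the subset where P is not maximal (i.e., excluding points where all arguments vanish). Since Q is strictly convex on (0,∞), if w₁ ≠ w₂ are both global minimizers of P over F lying in F¹, the normalized midpoint w₀ satisfies P(w₀) < P(w₁), a contradiction; hence the global minimizer on F¹ is unique. -/

import Mathlib

open MeasureTheory intervalIntegral Set

noncomputable def gaussQ (x : ℝ) : ℝ :=
  (Real.sqrt (2 * Real.pi))⁻¹ * ∫ u in Set.Ioi x, Real.exp (-u ^ 2 / 2)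

lemma gq_c_pos : 0 < (Real.sqrt (2 * Real.pi))⁻¹ := by positivity

lemma gq_integrable : Integrable (fun u : ℝ => Real.exp (-u ^ 2 / 2)) := by
  have h : (fun u : ℝ => Real.exp (-u ^ 2 / 2)) = fun u : ℝ => Real.exp (-(1/2) * u ^ 2) := by
    funext u; ring_nf
  rw [h]
  exact integrable_exp_neg_mul_sq (by norm_num)

lemma gq_sub (x y : ℝ) : gaussQ x - gaussQ y =
    (Real.sqrt (2 * Real.pi))⁻¹ * ∫ u in x..y, Real.exp (-u ^ 2 / 2) := by
  have hi := gq_integrable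
  have hx := integral_Iic_add_Ioi (b := x) hi.integrableOn hi.integrableOn
  have hy := integral_Iic_add_Ioi (b := y) hi.integrableOn hi.integrableOn
  have hd := integral_Iic_sub_Iic (a := x) (b := y) hi.integrableOn hi.integrableOn
  have h1 : (∫ u in Ioi x, Real.exp (-u ^ 2 / 2)) - ∫ u in Ioi y, Real.exp (-u ^ 2 / 2)
      = (∫ u in Iic y, Real.exp (-u ^ 2 / 2)) - ∫ u in Iic x, Real.exp (-u ^ 2 / 2) := by
    linarith
  unfold gaussQ
  rw [← mul_sub, h1, hd]

lemma gq_anti {x y : ℝ} (h : x < y) : gaussQ y < gaussQ x := by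
  have := gq_sub x y
  have hpos : 0 < ∫ u in x..y, Real.exp (-u ^ 2 / 2) :=
    intervalIntegral_pos_of_pos (gq_integrable.intervalIntegrable) (fun u => Real.exp_pos _) h
  nlinarith [gq_c_pos]

lemma gq_anti_le {x y : ℝ} (h : x ≤ y) : gaussQ y ≤ gaussQ x := by
  rcases eq_or_lt_of_le h with rfl | h
  · exact le_refl _
  · exact (gq_anti h).le

lemma gq_midpoint {x y : ℝ} (hx : 0 ≤ x) (hy : 0 ≤ y) :
    gaussQ ((x + y) / 2) ≤ (gaussQ x + gaussQ y) / 2 := by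
  wlog hxy : x ≤ y generalizing x y
  · have := this hy hx (le_of_not_ge hxy)
    rw [add_comm y x] at this; linarith
  set m := (x + y) / 2 with hm
  set h := (y - x) / 2 with hh
  have hh0 : 0 ≤ h := by rw [hh]; linarith
  have hxm : x ≤ m := by rw [hm]; linarith
  -- suffices: gaussQ m - gaussQ y ≤ gaussQ x - gaussQ m
  have e1 := gq_sub m y
  have e2 := gq_sub x m
  have etr : (∫ u in m..y, Real.exp (-u ^ 2 / 2))
      = ∫ u in x..m, Real.exp (-(u + h) ^ 2 / 2) := by
    rw [intervalIntegral.integral_comp_add_right (fun u => Real.exp (-u ^ 2 / 2)) h]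
    congr 1 <;> (rw [hm, hh]; ring)
  have emono : (∫ u in x..m, Real.exp (-(u + h) ^ 2 / 2))
      ≤ ∫ u in x..m, Real.exp (-u ^ 2 / 2) := by
    apply intervalIntegral.integral_mono_on hxm ?_ gq_integrable.intervalIntegrable
    · intro u hu
      apply Real.exp_le_exp.mpr
      have : 0 ≤ u := le_trans hx hu.1
      nlinarith
    · have : Integrable (fun u : ℝ => Real.exp (-(u + h) ^ 2 / 2)) :=
        gq_integrable.comp_add_right h
      exact this.intervalIntegrable
  nlinarith [gq_c_pos]

theorem global_minimizer_unique_on_strict_set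
    (N : ℕ) (v : Fin N → ℂ) (s : Fin N → ℝ) (hs : ∀ b, s b = 1 ∨ s b = -1)
    (t : ℝ) (ht : 0 < t) (F F₁ : Set ℂ)
    (hF : F = {w : ℂ | ‖w‖ = 1 ∧ ∀ b : Fin N, s b * (w * v b).re ≥ 0})
    (hF₁ : F₁ = {w ∈ F | ∃ b : Fin N, s b * (w * v b).re > 0})
    (P : ℂ → ℝ)
    (hP : ∀ w : ℂ, P w = (1 / (N : ℝ)) * ∑ b : Fin N, gaussQ (t * (s b * (w * v b).re)))
    (w₁ w₂ : ℂ) (hw₁ : w₁ ∈ F₁) (hw₂ : w₂ ∈ F₁)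
    (hglob₁ : ∀ w ∈ F, P w₁ ≤ P w) (hglob₂ : ∀ w ∈ F, P w₂ ≤ P w) :
    w₁ = w₂ := by
  subst hF hF₁
  obtain ⟨⟨habs₁, hge₁⟩, b₀, hb₀⟩ := hw₁
  obtain ⟨⟨habs₂, hge₂⟩, -⟩ := hw₂
  by_contra hne
  -- w₁ + w₂ ≠ 0
  have hsum_ne : w₁ + w₂ ≠ 0 := by
    intro h
    have hw2 : w₂ = -w₁ := by
      have := neg_eq_of_add_eq_zero_left h
      linear_combination -this
    have h2 := hge₂ b₀
    rw [hw2] at h2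
    simp only [neg_mul, Complex.neg_re, mul_neg] at h2
    linarith
  set r := ‖w₁ + w₂‖ with hr
  have hr_pos : 0 < r := by
    rw [hr]; exact norm_pos_iff.mpr hsum_ne
  have hr_lt : r < 2 := by
    have hnr : ¬ SameRay ℝ w₁ w₂ := by
      have hnorm : ‖w₁‖ = ‖w₂‖ := by
        rw [habs₁, habs₂]
      exact (not_sameRay_iff_of_norm_eq hnorm).mpr hne
    have := norm_add_lt_of_not_sameRay hnr
    rw [habs₁, habs₂] at this
    linarith
  set w₀ : ℂ := (r : ℂ)⁻¹ * (w₁ + w₂) with hw₀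
  have habs₀ : ‖w₀‖ = 1 := by
    rw [hw₀, norm_mul, norm_inv, Complex.norm_real, Real.norm_eq_abs, abs_of_pos hr_pos, ← hr]
    field_simp
  set x : Fin N → ℝ := fun b => s b * (w₁ * v b).re with hx
  set y : Fin N → ℝ := fun b => s b * (w₂ * v b).re with hy
  have key : ∀ b, s b * (w₀ * v b).re = (x b + y b) / r := by
    intro b
    rw [hw₀, hx, hy]
    rw [← Complex.ofReal_inv, mul_assoc, Complex.re_ofReal_mul, add_mul, Complex.add_re]
    ring
  have hw₀F : w₀ ∈ {w : ℂ | ‖w‖ = 1 ∧ ∀ b : Fin N, s b * (w * v b).re ≥ 0} := by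
    refine ⟨habs₀, fun b => ?_⟩
    rw [key b]
    exact div_nonneg (add_nonneg (hge₁ b) (hge₂ b)) hr_pos.le
  have hPeq : P w₂ = P w₁ :=
    le_antisymm (hglob₂ w₁ ⟨habs₁, hge₁⟩) (hglob₁ w₂ ⟨habs₂, hge₂⟩)
  -- per-index comparison
  have hle : ∀ b : Fin N, gaussQ (t * (s b * (w₀ * v b).re))
      ≤ (gaussQ (t * x b) + gaussQ (t * y b)) / 2 := by
    intro b
    rw [key b]
    have h1 : t * ((x b + y b) / 2) ≤ t * ((x b + y b) / r) := by
      have hxy0 : 0 ≤ x b + y b := add_nonneg (hge₁ b) (hge₂ b)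
      have h : (x b + y b) / 2 ≤ (x b + y b) / r :=
        div_le_div_of_nonneg_left hxy0 hr_pos hr_lt.le
      exact mul_le_mul_of_nonneg_left h ht.le
    have h2 : gaussQ (t * ((x b + y b) / r)) ≤ gaussQ (t * ((x b + y b) / 2)) := gq_anti_le h1
    have h3 : gaussQ (t * ((x b + y b) / 2)) ≤ (gaussQ (t * x b) + gaussQ (t * y b)) / 2 := by
      have := gq_midpoint (mul_nonneg ht.le (hge₁ b)) (mul_nonneg ht.le (hge₂ b))
      have he : (t * x b + t * y b) / 2 = t * ((x b + y b) / 2) := by ring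
      rw [he] at this
      exact this
    linarith
  have hlt : gaussQ (t * (s b₀ * (w₀ * v b₀).re))
      < (gaussQ (t * x b₀) + gaussQ (t * y b₀)) / 2 := by
    rw [key b₀]
    have hxy0 : 0 < x b₀ + y b₀ := lt_of_lt_of_le hb₀ (le_add_of_nonneg_right (hge₂ b₀))
    have h1 : t * ((x b₀ + y b₀) / 2) < t * ((x b₀ + y b₀) / r) := by
      apply mul_lt_mul_of_pos_left _ ht
      exact div_lt_div_of_pos_left hxy0 hr_pos hr_lt
    have h2 := gq_anti h1
    have h3 : gaussQ (t * ((x b₀ + y b₀) / 2))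
        ≤ (gaussQ (t * x b₀) + gaussQ (t * y b₀)) / 2 := by
      have := gq_midpoint (mul_nonneg ht.le (hge₁ b₀)) (mul_nonneg ht.le (hge₂ b₀))
      have he : (t * x b₀ + t * y b₀) / 2 = t * ((x b₀ + y b₀) / 2) := by ring
      rw [he] at this
      exact this
    linarith
  have hsum : (∑ b : Fin N, gaussQ (t * (s b * (w₀ * v b).re)))
      < ∑ b : Fin N, (gaussQ (t * x b) + gaussQ (t * y b)) / 2 :=
    Finset.sum_lt_sum (fun b _ => hle b) ⟨b₀, Finset.mem_univ b₀, hlt⟩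
  have hNpos : (0 : ℝ) < 1 / (N : ℝ) := by
    have : 0 < N := Fin.pos b₀
    positivity
  have hNne : (1 / (N : ℝ)) ≠ 0 := ne_of_gt hNpos
  have e2 : (∑ b : Fin N, gaussQ (t * (s b * (w₂ * v b).re)))
      = ∑ b : Fin N, gaussQ (t * (s b * (w₁ * v b).re)) := by
    have h := hPeq
    rw [hP w₁, hP w₂] at h
    exact mul_left_cancel₀ hNne h
  have hsum2 : (∑ b : Fin N, (gaussQ (t * x b) + gaussQ (t * y b)) / 2)
      = ∑ b : Fin N, gaussQ (t * (s b * (w₁ * v b).re)) := by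
    simp only [hx, hy]
    rw [← Finset.sum_div, Finset.sum_add_distrib]
    rw [e2]
    ring
  have hP0 : P w₀ < P w₁ := by
    rw [hP w₀, hP w₁, ← hsum2]
    exact mul_lt_mul_of_pos_left hsum hNpos
  exact absurd (hglob₁ w₀ hw₀F) (not_le.mpr hP0)
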